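/- Let G and H be two n-vertex graphs whose adjacency matrices are written in the block form A(G) = [[A₁, b],[bᵀ, 0]] and A(H) = [[B₁, c],[cᵀ, 0]], where the last vertex of each graph is designated as a root. Then the following are equivalent: (i) G is cospectral with H and G−uₙ is cospectral with H−vₙ; (ii) there exists an (n−1)×(n−1) orthogonal matrix Q such that Qᵀ A₁ Q = B₁ and Qᵀ b = c (equivalently, diag(Qᵀ,1) A(G) diag(Q,1) = A(H)). -/

import Mathlib

open Matrix

noncomputable section

/-- The adjacency matrix of the complement graph: `J - I - A`. -/
def complMat {V : Type} [Fintype V] [DecidableEq V] (A : Matrix V V ℝ) : Matrix V V ℝ :=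
  (Matrix.of fun _ _ => (1 : ℝ)) - 1 - A

/-- Two graphs, given by their adjacency matrices, are generalized cospectral if they are
cospectral and their complements are cospectral. -/
def GenCospectral {V : Type} [Fintype V] [DecidableEq V] (A B : Matrix V V ℝ) : Prop :=
  A.charpoly = B.charpoly ∧ (complMat A).charpoly = (complMat B).charpoly

/-- The bordered matrix `[[A, b], [bᵀ, 0]]` (adjacency matrix of the overgraph `G + b`). -/
def border {V : Type} [Fintype V] [DecidableEq V] (A : Matrix V V ℝ) (b : V → ℝ) :
    Matrix (V ⊕ Unit) (V ⊕ Unit) ℝ :=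
  Matrix.fromBlocks A (Matrix.of fun i _ => b i) (Matrix.of fun _ j => b j) 0

section Aux
open Polynomial

lemma evalCharpoly {n : Type} [Fintype n] [DecidableEq n] (M : Matrix n n ℝ) (x : ℝ) :
    M.charpoly.eval x = (x • (1 : Matrix n n ℝ) - M).det := by
  rw [Matrix.charpoly, ← Polynomial.coe_evalRingHom, RingHom.map_det]
  congr 1
  ext i j
  by_cases h : i = j <;>
    simp [h, Matrix.charmatrix_apply, Matrix.one_apply, Matrix.diagonal_apply]

lemma charpoly_conj {n : Type} [Fintype n] [DecidableEq n] (P M : Matrix n n ℝ)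
    (hP : Pᵀ * P = 1) : (Pᵀ * M * P).charpoly = M.charpoly := by
  apply Polynomial.eq_of_infinite_eval_eq
  apply Set.infinite_of_injective_forall_mem (f := fun x : ℝ => x)
  · exact fun a b h => h
  · intro x
    simp only [Set.mem_setOf_eq]
    rw [evalCharpoly, evalCharpoly]
    have key : x • (1 : Matrix n n ℝ) - Pᵀ * M * P = Pᵀ * (x • (1:Matrix n n ℝ) - M) * P := by
      rw [Matrix.mul_sub, Matrix.sub_mul, Matrix.mul_smul, Matrix.smul_mul, Matrix.mul_one, hP]
    have hdet : P.det * P.det = 1 := by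
      have := congrArg Matrix.det hP
      rwa [Matrix.det_mul, Matrix.det_transpose, Matrix.det_one] at this
    rw [key, Matrix.det_mul, Matrix.det_mul, Matrix.det_transpose]
    linear_combination (x • (1:Matrix n n ℝ) - M).det * hdet

lemma charpoly_diag {n : Type} [Fintype n] [DecidableEq n] (d : n → ℝ) :
    (Matrix.diagonal d).charpoly = ∏ i, (X - C (d i)) := by
  rw [Matrix.charpoly]
  have : charmatrix (Matrix.diagonal d) = Matrix.diagonal (fun i => (X : ℝ[X]) - C (d i)) := by
    ext i j
    by_cases h : i = j
    · subst h; simp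
    · simp [h, Matrix.diagonal_apply_ne _ h]
  rw [this, Matrix.det_diagonal]

lemma exists_perm_comp {m : ℕ} (f g : Fin m → ℝ)
    (h : Multiset.map f Finset.univ.val = Multiset.map g Finset.univ.val) :
    ∃ σ : Equiv.Perm (Fin m), f ∘ σ = g := by
  have hm : ∀ (u : Fin m → ℝ) (σ : Equiv.Perm (Fin m)),
      Multiset.map (u ∘ σ) Finset.univ.val = Multiset.map u Finset.univ.val := by
    intro u σ
    have : Multiset.map (⇑σ) Finset.univ.val = Finset.univ.val :=
      Multiset.map_univ_val_equiv σ
    calc Multiset.map (u ∘ σ) Finset.univ.val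
        = Multiset.map u (Multiset.map (⇑σ) Finset.univ.val) := by
          rw [Multiset.map_map]
      _ = Multiset.map u Finset.univ.val := by rw [this]
  have key : f ∘ Tuple.sort f = g ∘ Tuple.sort g := by
    have h1 : List.ofFn (f ∘ Tuple.sort f) = List.ofFn (g ∘ Tuple.sort g) := by
      refine (fun hp h1 h2 => List.Perm.eq_of_sortedLE h1 h2 hp) ?_ ?_ ?_
      · rw [← Multiset.coe_eq_coe, ← Fin.univ_val_map, ← Fin.univ_val_map,
          hm f (Tuple.sort f), hm g (Tuple.sort g), h]
      · exact (Tuple.monotone_sort f).sortedLE_ofFn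
      · exact (Tuple.monotone_sort g).sortedLE_ofFn
    have := List.ofFn_injective h1
    exact this
  refine ⟨(Tuple.sort g).symm.trans (Tuple.sort f), funext fun x => ?_⟩
  have := congrFun key ((Tuple.sort g).symm x)
  simpa using this

lemma spectral_real {m : ℕ} (M : Matrix (Fin m) (Fin m) ℝ) (hM : M.IsHermitian) :
    ∃ U : Matrix (Fin m) (Fin m) ℝ, Uᵀ * U = 1 ∧ U * Uᵀ = 1 ∧
      Uᵀ * M * U = Matrix.diagonal hM.eigenvalues ∧
      M.charpoly = ∏ i, (X - C (hM.eigenvalues i)) := by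
  set U : Matrix (Fin m) (Fin m) ℝ := (Matrix.IsHermitian.eigenvectorUnitary hM : Matrix (Fin m) (Fin m) ℝ) with hUdef
  have hstar : star U = Uᵀ := Matrix.conjTranspose_eq_transpose_of_trivial U
  have h1 : Uᵀ * U = 1 := by
    rw [← hstar]; exact Unitary.coe_star_mul_self (Matrix.IsHermitian.eigenvectorUnitary hM)
  have h2 : U * Uᵀ = 1 := by
    rw [← hstar]; exact Unitary.coe_mul_star_self (Matrix.IsHermitian.eigenvectorUnitary hM)
  have hdiag : Uᵀ * M * U = Matrix.diagonal hM.eigenvalues := by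
    have := Matrix.IsHermitian.conjStarAlgAut_star_eigenvectorUnitary hM
    simp only [Unitary.conjStarAlgAut_star_apply] at this
    rw [hstar] at this
    simpa using this
  refine ⟨U, h1, h2, hdiag, ?_⟩
  have : M.charpoly = (Uᵀ * M * U).charpoly := by
    conv_lhs => rw [show M = Uᵀᵀ * (Uᵀ * M * U) * Uᵀ by
      rw [Matrix.transpose_transpose]
      symm
      calc U * (Uᵀ * M * U) * Uᵀ = (U * Uᵀ) * M * (U * Uᵀ) := by
            simp only [Matrix.mul_assoc]
        _ = M := by rw [h2, Matrix.one_mul, Matrix.mul_one]]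
    exact charpoly_conj Uᵀ _ (by rw [Matrix.transpose_transpose, h2])
  rw [this, hdiag, charpoly_diag]

lemma border_conj {m : ℕ} (A : Matrix (Fin m) (Fin m) ℝ) (b : Fin m → ℝ)
    (P : Matrix (Fin m) (Fin m) ℝ) (hP : Pᵀ * P = 1) :
    (border (Pᵀ * A * P) (Pᵀ *ᵥ b)).charpoly = (border A b).charpoly := by
  have e1 : Pᵀ * (Matrix.of fun i (_ : Unit) => b i)
      = Matrix.of fun i (_ : Unit) => (Pᵀ *ᵥ b) i := by
    ext i j
    simp [Matrix.mul_apply, Matrix.mulVec, dotProduct]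
  have e2 : (Matrix.of fun (_ : Unit) j => b j) * P
      = Matrix.of fun (_ : Unit) j => (Pᵀ *ᵥ b) j := by
    ext i j
    simp [Matrix.mul_apply, Matrix.mulVec, dotProduct, mul_comm]
  have key : border (Pᵀ * A * P) (Pᵀ *ᵥ b)
      = (Matrix.fromBlocks P 0 0 (1 : Matrix Unit Unit ℝ))ᵀ * border A b *
        Matrix.fromBlocks P 0 0 1 := by
    rw [Matrix.fromBlocks_transpose, Matrix.transpose_zero, Matrix.transpose_one]
    rw [border, border, Matrix.fromBlocks_multiply, Matrix.fromBlocks_multiply]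
    simp only [Matrix.transpose_zero, Matrix.mul_zero, Matrix.zero_mul, add_zero, zero_add, Matrix.mul_one,
      Matrix.one_mul, ← Matrix.mul_assoc]
    rw [e1, e2]
  rw [key]
  apply charpoly_conj
  rw [Matrix.fromBlocks_transpose, Matrix.transpose_zero, Matrix.transpose_one,
    Matrix.fromBlocks_multiply]
  simp [hP, Matrix.fromBlocks_one]

lemma eval_border_diagonal {m : ℕ} (α v : Fin m → ℝ) (x : ℝ) (hx : ∀ i, x - α i ≠ 0) :
    (border (Matrix.diagonal α) v).charpoly.eval x
      = (∏ i, (x - α i)) * (x - ∑ i, v i ^ 2 / (x - α i)) := by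
  rw [evalCharpoly]
  have hsplit : x • (1 : Matrix (Fin m ⊕ Unit) (Fin m ⊕ Unit) ℝ) - border (Matrix.diagonal α) v
      = Matrix.fromBlocks (Matrix.diagonal fun i => x - α i)
          (Matrix.of fun i _ => -v i) (Matrix.of fun _ j => -v j)
          (Matrix.of fun _ _ => x) := by
    ext (i|i) (j|j)
    · by_cases h : i = j <;>
        simp [border, Matrix.one_apply, Matrix.diagonal_apply, h]
    · simp [border]
    · simp [border]
    · simp [border, Matrix.one_apply]
  letI : Invertible (Matrix.diagonal fun i => x - α i) :=
    ⟨Matrix.diagonal fun i => (x - α i)⁻¹, by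
      rw [Matrix.diagonal_mul_diagonal]
      rw [show (fun i => (x - α i)⁻¹ * (x - α i)) = fun _ => (1:ℝ) from
        funext fun i => inv_mul_cancel₀ (hx i), Matrix.diagonal_one], by
      rw [Matrix.diagonal_mul_diagonal]
      rw [show (fun i => (x - α i) * (x - α i)⁻¹) = fun _ => (1:ℝ) from
        funext fun i => mul_inv_cancel₀ (hx i), Matrix.diagonal_one]⟩
  have hinv : ⅟(Matrix.diagonal fun i => x - α i)
      = Matrix.diagonal (fun i => (x - α i)⁻¹) := rfl
  rw [hsplit, Matrix.det_fromBlocks₁₁, hinv, Matrix.det_diagonal]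
  congr 1
  rw [Matrix.det_unique]
  simp only [Matrix.sub_apply, Matrix.of_apply, Matrix.mul_apply, Matrix.diagonal_apply,
    Finset.sum_ite_eq, Finset.mem_univ, if_true]
  rw [show (∑ i, v i ^ 2 / (x - α i)) = ∑ j, (-v j) * (x - α j)⁻¹ * (-v j) from
    Finset.sum_congr rfl fun j _ => by rw [div_eq_mul_inv]; ring]
  congr 1
  apply Finset.sum_congr rfl
  intro j _
  rw [Finset.sum_eq_single j (fun k _ hk => by simp [hk])
    (fun hj => absurd (Finset.mem_univ j) hj)]
  simp [mul_assoc]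

lemma fiber_sum_eq {m : ℕ} (α f g : Fin m → ℝ)
    (h : ∀ x : ℝ, (∀ i, x - α i ≠ 0) → ∑ i, f i / (x - α i) = ∑ i, g i / (x - α i))
    (lam : ℝ) :
    ∑ i ∈ Finset.univ.filter (fun i => α i = lam), f i
      = ∑ i ∈ Finset.univ.filter (fun i => α i = lam), g i := by
  classical
  set S : Finset ℝ := Finset.image α Finset.univ with hS
  set fs : ℝ → ℝ := fun μ => ∑ i ∈ Finset.univ.filter (fun i => α i = μ), f i with hfs
  set gs : ℝ → ℝ := fun μ => ∑ i ∈ Finset.univ.filter (fun i => α i = μ), g i with hgs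
  set F : ℝ[X] := ∑ μ ∈ S, C (fs μ) * ∏ ν ∈ S.erase μ, (X - C ν) with hF
  set G : ℝ[X] := ∑ μ ∈ S, C (gs μ) * ∏ ν ∈ S.erase μ, (X - C ν) with hG
  have evalF : ∀ (u : Fin m → ℝ) (x : ℝ), (∀ i, x - α i ≠ 0) →
      (∑ μ ∈ S, C (∑ i ∈ Finset.univ.filter (fun i => α i = μ), u i) *
        ∏ ν ∈ S.erase μ, (X - C ν)).eval x
        = (∏ ν ∈ S, (x - ν)) * ∑ i, u i / (x - α i) := by
    intro u x hx
    have hgroup : ∑ i, u i / (x - α i)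
        = ∑ μ ∈ S, (∑ i ∈ Finset.univ.filter (fun i => α i = μ), u i) / (x - μ) := by
      rw [← Finset.sum_fiberwise_of_maps_to (g := α) (fun i _ => Finset.mem_image_of_mem α
        (Finset.mem_univ i))]
      apply Finset.sum_congr rfl
      intro μ _
      rw [Finset.sum_div]
      apply Finset.sum_congr rfl
      intro i hi
      rw [(Finset.mem_filter.mp hi).2]
    rw [hgroup, Finset.mul_sum]
    simp only [eval_finset_sum, eval_mul, eval_C, eval_prod, eval_sub, eval_X]
    apply Finset.sum_congr rfl
    intro μ hμ
    obtain ⟨i, _, hi⟩ := Finset.mem_image.mp hμ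
    have hxμ : x - μ ≠ 0 := by rw [← hi]; exact hx i
    rw [← Finset.mul_prod_erase S _ hμ]
    field_simp
  have hFG : F = G := by
    apply Polynomial.eq_of_infinite_eval_eq
    apply Set.Infinite.mono (s := {x : ℝ | ∀ i, x - α i ≠ 0})
    · intro x hx
      simp only [Set.mem_setOf_eq] at hx ⊢
      rw [hF, hG, evalF f x hx, evalF g x hx, h x hx]
    · have : {x : ℝ | ∀ i, x - α i ≠ 0} = (Set.range α)ᶜ := by
        ext x
        simp [sub_ne_zero, eq_comm, Set.mem_range, not_exists]
      rw [this]
      exact Set.Infinite.mono (fun x hx => hx) ((Set.finite_range α).infinite_compl)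
  by_cases hl : lam ∈ S
  · have evlam : ∀ (us : ℝ → ℝ),
        (∑ μ ∈ S, C (us μ) * ∏ ν ∈ S.erase μ, (X - C ν)).eval lam
          = us lam * ∏ ν ∈ S.erase lam, (lam - ν) := by
      intro us
      simp only [eval_finset_sum, eval_mul, eval_C, eval_prod, eval_sub, eval_X]
      rw [Finset.sum_eq_single lam]
      · intro μ hμ hne
        have : lam ∈ S.erase μ := Finset.mem_erase.mpr ⟨(Ne.symm hne), hl⟩
        rw [Finset.prod_eq_zero this (by ring), mul_zero]
      · intro hlam; exact absurd hl hlam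
    have := congrArg (Polynomial.eval lam) hFG
    rw [hF, hG, evlam fs, evlam gs] at this
    have hprod : ∏ ν ∈ S.erase lam, (lam - ν) ≠ 0 := by
      rw [Finset.prod_ne_zero_iff]
      intro ν hν
      have : ν ≠ lam := (Finset.mem_erase.mp hν).1
      exact sub_ne_zero.mpr (Ne.symm this)
    exact mul_right_cancel₀ hprod this
  · have hempty : Finset.univ.filter (fun i => α i = lam) = ∅ := by
      apply Finset.filter_eq_empty_iff.mpr
      intro i _
      intro hcon
      exact hl (Finset.mem_image.mpr ⟨i, Finset.mem_univ i, hcon⟩)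
    rw [hempty, Finset.sum_empty, Finset.sum_empty]

lemma exists_reflector {m : ℕ} (α b' c' : Fin m → ℝ)
    (hsum : ∀ lam : ℝ, ∑ i ∈ Finset.univ.filter (fun i => α i = lam), b' i ^ 2
        = ∑ i ∈ Finset.univ.filter (fun i => α i = lam), c' i ^ 2) :
    ∃ T : Matrix (Fin m) (Fin m) ℝ, Tᵀ = T ∧ T * T = 1 ∧
      T * Matrix.diagonal α = Matrix.diagonal α * T ∧ T *ᵥ b' = c' := by
  classical
  set S : Finset ℝ := Finset.image α Finset.univ with hSdef
  set w : ℝ → (Fin m → ℝ) := fun lam i => if α i = lam then b' i - c' i else 0 with hwdef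
  set s : ℝ → ℝ := fun lam => 2 / (w lam ⬝ᵥ w lam) with hsdef
  set N : Matrix (Fin m) (Fin m) ℝ :=
    ∑ lam ∈ S, s lam • Matrix.vecMulVec (w lam) (w lam) with hNdef
  have hweq : ∀ l μ, l ≠ μ → w l ⬝ᵥ w μ = 0 := by
    intro l μ hne
    apply Finset.sum_eq_zero
    intro i _
    by_cases h1 : α i = l
    · have h2 : α i ≠ μ := by rw [h1]; exact hne
      simp only [hwdef]
      rw [if_neg h2, mul_zero]
    · simp only [hwdef]
      rw [if_neg h1, zero_mul]
  have hvv : ∀ l μ : ℝ, Matrix.vecMulVec (w l) (w l) * Matrix.vecMulVec (w μ) (w μ)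
      = (w l ⬝ᵥ w μ) • Matrix.vecMulVec (w l) (w μ) := by
    intro l μ
    ext i j
    simp only [Matrix.mul_apply, Matrix.vecMulVec_apply, Matrix.smul_apply, smul_eq_mul,
      dotProduct, Finset.sum_mul]
    apply Finset.sum_congr rfl
    intro k _
    ring
  have hself : ∀ l, (s l • Matrix.vecMulVec (w l) (w l)) * (s l • Matrix.vecMulVec (w l) (w l))
      = (2:ℝ) • (s l • Matrix.vecMulVec (w l) (w l)) := by
    intro l
    rw [Matrix.smul_mul, Matrix.mul_smul, hvv, smul_smul, smul_smul, smul_smul]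
    congr 1
    by_cases h0 : w l ⬝ᵥ w l = 0
    · simp [hsdef, h0]
    · simp only [hsdef]
      field_simp
  have hNN : N * N = (2:ℝ) • N := by
    rw [hNdef, Finset.sum_mul_sum, Finset.smul_sum]
    apply Finset.sum_congr rfl
    intro l hl
    rw [Finset.sum_eq_single l]
    · exact hself l
    · intro μ _ hμ
      rw [Matrix.smul_mul, Matrix.mul_smul, hvv, hweq l μ (Ne.symm hμ), zero_smul,
        smul_zero, smul_zero]
    · intro h; exact absurd hl h
  refine ⟨1 - N, ?_, ?_, ?_, ?_⟩
  · rw [Matrix.transpose_sub, Matrix.transpose_one, hNdef, Matrix.transpose_sum]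
    congr 1
    apply Finset.sum_congr rfl
    intro l _
    rw [Matrix.transpose_smul]
    congr 1
    ext i j
    simp [Matrix.vecMulVec_apply, mul_comm]
  · have expand : (1 - N) * (1 - N) = 1 - N - N + N * N := by noncomm_ring
    rw [expand, hNN, two_smul]
    abel
  · rw [Matrix.sub_mul, Matrix.mul_sub, Matrix.one_mul, Matrix.mul_one]
    congr 1
    rw [hNdef, Matrix.sum_mul, Matrix.mul_sum]
    apply Finset.sum_congr rfl
    intro l _
    rw [Matrix.smul_mul, Matrix.mul_smul]
    congr 1
    ext i j
    simp only [Matrix.mul_apply, Matrix.vecMulVec_apply, Matrix.diagonal_apply]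
    rw [Finset.sum_eq_single j, Finset.sum_eq_single i]
    · simp only [if_pos rfl]
      by_cases h1 : α i = l <;> by_cases h2 : α j = l
      · simp only [hwdef]; rw [if_pos h1, if_pos h2, h1, h2]; ring
      · simp only [hwdef]; rw [if_neg h2]; ring
      · simp only [hwdef]; rw [if_neg h1]; ring
      · simp only [hwdef]; rw [if_neg h1, if_neg h2]; ring
    · intro k _ hk; simp [Ne.symm hk]
    · intro h; exact absurd (Finset.mem_univ i) h
    · intro k _ hk; simp [hk]
    · intro h; exact absurd (Finset.mem_univ j) h
  · have hsummv : N *ᵥ b' = fun i => ∑ l ∈ S, (s l * (w l ⬝ᵥ b')) * w l i := by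
      funext i
      rw [hNdef]
      simp only [Matrix.mulVec, dotProduct, Matrix.sum_apply, Matrix.smul_apply,
        Matrix.vecMulVec_apply, smul_eq_mul, Finset.sum_mul]
      rw [Finset.sum_comm]
      apply Finset.sum_congr rfl
      intro l _
      calc ∑ x, s l * (w l i * w l x) * b' x
          = ∑ x, (s l * (w l x * b' x)) * w l i :=
            Finset.sum_congr rfl fun k _ => by ring
        _ = (s l * ∑ k, w l k * b' k) * w l i := by
            rw [Finset.mul_sum, Finset.sum_mul]
    rw [Matrix.sub_mulVec, Matrix.one_mulVec, hsummv]
    funext i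
    set lam : ℝ := α i with hlam
    have hmem : lam ∈ S := Finset.mem_image_of_mem α (Finset.mem_univ i)
    simp only [Pi.sub_apply]
    rw [Finset.sum_eq_single lam]
    · by_cases h0 : w lam = 0
      · have hbci : b' i - c' i = 0 := by
          have h := congrFun h0 i
          simpa [hwdef, ← hlam] using h
        rw [h0]
        simp
        linarith
      · have hn : w lam ⬝ᵥ w lam ≠ 0 := fun h => h0 (dotProduct_self_eq_zero.mp h)
        have hkey : w lam ⬝ᵥ w lam = 2 * (w lam ⬝ᵥ b') := by
          have e1 : w lam ⬝ᵥ w lam - 2 * (w lam ⬝ᵥ b')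
              = (∑ k ∈ Finset.univ.filter (fun k => α k = lam), c' k ^ 2)
                - ∑ k ∈ Finset.univ.filter (fun k => α k = lam), b' k ^ 2 := by
            rw [dotProduct, dotProduct, Finset.mul_sum,
              ← Finset.sum_sub_distrib, Finset.sum_filter, Finset.sum_filter,
              ← Finset.sum_sub_distrib]
            apply Finset.sum_congr rfl
            intro k _
            by_cases hk : α k = lam
            · simp [hwdef, hk]
              try ring
            · simp [hwdef, hk]
              try ring
          rw [hsum lam] at e1
          linarith
        have hb : w lam ⬝ᵥ b' ≠ 0 := by
          intro h
          rw [h, mul_zero] at hkey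
          exact hn hkey
        have hwi : w lam i = b' i - c' i := by
          simp [hwdef, ← hlam]
        rw [hwi]
        simp only [hsdef]
        rw [hkey]
        field_simp
        try ring
    · intro l _ hl
      have hz : w l i = 0 := by
        simp only [hwdef]
        rw [if_neg (fun h => hl ((hlam.trans h).symm))]
      rw [hz, mul_zero]
    · intro h; exact absurd hmem h

end Aux

open Polynomial

theorem rooted_cospectral_iff_exists_orthogonal
    {m : ℕ} (A₁ B₁ : Matrix (Fin m) (Fin m) ℝ) (b c : Fin m → ℝ)
    (hA₁ : A₁.IsAdjMatrix) (hB₁ : B₁.IsAdjMatrix)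
    (hb : ∀ i, b i = 0 ∨ b i = 1) (hc : ∀ i, c i = 0 ∨ c i = 1) :
    ((border A₁ b).charpoly = (border B₁ c).charpoly ∧ A₁.charpoly = B₁.charpoly) ↔
      ∃ Q : Matrix (Fin m) (Fin m) ℝ,
        Qᵀ * Q = 1 ∧ Qᵀ * A₁ * Q = B₁ ∧ Qᵀ *ᵥ b = c := by
  constructor
  · rintro ⟨hbord, hchar⟩
    have hAH : A₁.IsHermitian := by
      show A₁ᴴ = A₁
      rw [Matrix.conjTranspose_eq_transpose_of_trivial]
      exact hA₁.symm
    have hBH : B₁.IsHermitian := by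
      show B₁ᴴ = B₁
      rw [Matrix.conjTranspose_eq_transpose_of_trivial]
      exact hB₁.symm
    obtain ⟨U, hU1, hU2, hUdiag, hUchar⟩ := spectral_real A₁ hAH
    obtain ⟨V0, hV01, hV02, hV0diag, hV0char⟩ := spectral_real B₁ hBH
    set αe : Fin m → ℝ := hAH.eigenvalues with hαe
    set βe : Fin m → ℝ := hBH.eigenvalues with hβe
    -- eigenvalue multiset equality
    have hprodeq : ∏ i, (X - C (βe i)) = ∏ i, (X - C (αe i)) := by
      rw [← hUchar, ← hV0char, hchar]
    have hroots : Multiset.map βe Finset.univ.val = Multiset.map αe Finset.univ.val := by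
      have e1 : ∀ (u : Fin m → ℝ), ∏ i, (X - C (u i))
          = ((Multiset.map u Finset.univ.val).map (fun a => X - C a)).prod := by
        intro u
        rw [Multiset.map_map]
        rfl
      have := congrArg Polynomial.roots hprodeq
      rwa [e1 βe, e1 αe, Polynomial.roots_multiset_prod_X_sub_C,
        Polynomial.roots_multiset_prod_X_sub_C] at this
    obtain ⟨σ, hσ⟩ := exists_perm_comp βe αe hroots
    set V : Matrix (Fin m) (Fin m) ℝ := V0.submatrix id σ with hVdef
    have hentry : ∀ (M : Matrix (Fin m) (Fin m) ℝ) (N : Matrix (Fin m) (Fin m) ℝ),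
        M = N → ∀ i j, M i j = N i j := by
      intro M N h i j; rw [h]
    have hV1 : Vᵀ * V = 1 := by
      ext k l
      have e := hentry _ _ hV01 (σ k) (σ l)
      simp only [Matrix.mul_apply, Matrix.transpose_apply, Matrix.one_apply] at e ⊢
      simp only [hVdef, Matrix.submatrix_apply, id_eq]
      rw [show ((if σ k = σ l then (1:ℝ) else 0) = if k = l then (1:ℝ) else 0) from by
        by_cases h : k = l
        · rw [if_pos h, if_pos (by rw [h])]
        · rw [if_neg h, if_neg (fun hh => h (σ.injective hh))]] at e
      exact e
    have hV2 : V * Vᵀ = 1 := mul_eq_one_comm.mp hV1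
    have hVdiag : Vᵀ * B₁ * V = Matrix.diagonal αe := by
      ext k l
      have e := hentry _ _ hV0diag (σ k) (σ l)
      simp only [Matrix.mul_apply, Matrix.transpose_apply, Matrix.diagonal_apply] at e ⊢
      simp only [hVdef, Matrix.submatrix_apply, id_eq]
      have hσk : βe (σ k) = αe k := congrFun hσ k
      rw [show ((if σ k = σ l then βe (σ k) else 0) = if k = l then αe k else 0) from by
        by_cases h : k = l
        · rw [if_pos h, if_pos (by rw [h]), hσk]
        · rw [if_neg h, if_neg (fun hh => h (σ.injective hh))]] at e
      exact e
    set b' : Fin m → ℝ := Uᵀ *ᵥ b with hb'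
    set c' : Fin m → ℝ := Vᵀ *ᵥ c with hc'
    have hbord1 : (border (Matrix.diagonal αe) b').charpoly = (border A₁ b).charpoly := by
      rw [← hUdiag]; exact border_conj A₁ b U hU1
    have hbord2 : (border (Matrix.diagonal αe) c').charpoly = (border B₁ c).charpoly := by
      rw [← hVdiag]; exact border_conj B₁ c V hV1
    have hdd : (border (Matrix.diagonal αe) b').charpoly
        = (border (Matrix.diagonal αe) c').charpoly := by
      rw [hbord1, hbord2, hbord]
    have hfrac : ∀ x : ℝ, (∀ i, x - αe i ≠ 0) →
        ∑ i, b' i ^ 2 / (x - αe i) = ∑ i, c' i ^ 2 / (x - αe i) := by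
      intro x hx
      have := congrArg (Polynomial.eval x) hdd
      rw [eval_border_diagonal αe b' x hx, eval_border_diagonal αe c' x hx] at this
      have hprod : (∏ i, (x - αe i)) ≠ 0 := Finset.prod_ne_zero_iff.mpr fun i _ => hx i
      have := mul_left_cancel₀ hprod this
      linarith
    have hsum : ∀ lam : ℝ, ∑ i ∈ Finset.univ.filter (fun i => αe i = lam), b' i ^ 2
        = ∑ i ∈ Finset.univ.filter (fun i => αe i = lam), c' i ^ 2 :=
      fiber_sum_eq αe (fun i => b' i ^ 2) (fun i => c' i ^ 2) hfrac
    obtain ⟨T, hTt, hTT, hTD, hTb⟩ := exists_reflector αe b' c' hsum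
    have ht : (U * T * Vᵀ)ᵀ = V * T * Uᵀ := by
      rw [Matrix.transpose_mul, Matrix.transpose_mul, Matrix.transpose_transpose, hTt,
        ← Matrix.mul_assoc]
    refine ⟨U * T * Vᵀ, ?_, ?_, ?_⟩
    · rw [ht]
      calc V * T * Uᵀ * (U * T * Vᵀ)
          = V * (T * ((Uᵀ * U) * T)) * Vᵀ := by simp only [Matrix.mul_assoc]
        _ = V * (T * T) * Vᵀ := by rw [hU1, Matrix.one_mul]
        _ = 1 := by rw [hTT, Matrix.mul_one, hV2]
    · rw [ht]
      have hAdecomp : A₁ = U * Matrix.diagonal αe * Uᵀ := by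
        rw [← hUdiag]
        calc A₁ = (U * Uᵀ) * A₁ * (U * Uᵀ) := by rw [hU2, Matrix.one_mul, Matrix.mul_one]
          _ = U * (Uᵀ * A₁ * U) * Uᵀ := by simp only [Matrix.mul_assoc]
      have hBdecomp : B₁ = V * Matrix.diagonal αe * Vᵀ := by
        rw [← hVdiag]
        calc B₁ = (V * Vᵀ) * B₁ * (V * Vᵀ) := by rw [hV2, Matrix.one_mul, Matrix.mul_one]
          _ = V * (Vᵀ * B₁ * V) * Vᵀ := by simp only [Matrix.mul_assoc]
      rw [hAdecomp]
      have hmid : T * (Matrix.diagonal αe * T) = Matrix.diagonal αe := by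
        rw [← Matrix.mul_assoc, hTD, Matrix.mul_assoc, hTT, Matrix.mul_one]
      calc V * T * Uᵀ * (U * Matrix.diagonal αe * Uᵀ) * (U * T * Vᵀ)
          = V * (T * ((Uᵀ * U) * (Matrix.diagonal αe * ((Uᵀ * U) * T)))) * Vᵀ := by
            simp only [Matrix.mul_assoc]
        _ = V * (T * (Matrix.diagonal αe * T)) * Vᵀ := by
            rw [hU1, Matrix.one_mul, Matrix.one_mul]
        _ = V * Matrix.diagonal αe * Vᵀ := by rw [hmid]
        _ = B₁ := hBdecomp.symm
    · rw [ht]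
      rw [← Matrix.mulVec_mulVec, ← Matrix.mulVec_mulVec, ← hb', hTb, hc',
        Matrix.mulVec_mulVec, hV2, Matrix.one_mulVec]
  · rintro ⟨Q, hQ1, hQ2, hQ3⟩
    constructor
    · rw [← hQ2, ← hQ3]
      exact (border_conj A₁ b Q hQ1).symm
    · rw [← hQ2]
      exact (charpoly_conj Q A₁ hQ1).symm
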